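/- Let W be a partial isometry with W² = 0, support projection W†W onto K₁ and range projection WW† onto K₂, and let N be a positive semidefinite operator with support and image equal to K₁. Define P_± = [W†W + WW† ± (W+W†)]/2 and O = 4(P₊√N P₊)² − 4(P₋√N P₋)². Then O = WN + NW†, O² = WN²W† + N², and the support of O equals K₁ ⊕ K₂; moreover P₊ is the spectral projection of O onto its positive eigenvalues. -/

import Mathlib

open Matrix BigOperators
open scoped ComplexOrder

noncomputable section

def Matrix.PosSemidef.sqrt {n 𝕜 : Type*} [Fintype n] [DecidableEq n] [RCLike 𝕜]
    {A : Matrix n n 𝕜} (hA : A.PosSemidef) : Matrix n n 𝕜 :=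
  hA.1.eigenvectorUnitary.1 * diagonal ((↑) ∘ (Real.sqrt ·) ∘ hA.1.eigenvalues) *
  (star hA.1.eigenvectorUnitary : Matrix n n 𝕜)

theorem stmt6_sqrt_herm {n : Type*} [Fintype n] [DecidableEq n] {N : Matrix n n ℂ}
    (hN : N.PosSemidef) : (hN.sqrt)ᴴ = hN.sqrt := by
  unfold Matrix.PosSemidef.sqrt
  rw [conjTranspose_mul, conjTranspose_mul, diagonal_conjTranspose, Matrix.mul_assoc]
  have hd : star ((RCLike.ofReal : ℝ → ℂ) ∘ (Real.sqrt ·) ∘ hN.1.eigenvalues) =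
      (RCLike.ofReal : ℝ → ℂ) ∘ (Real.sqrt ·) ∘ hN.1.eigenvalues := by
    funext i; simp
  rw [hd, ← Matrix.star_eq_conjTranspose, ← Matrix.star_eq_conjTranspose, star_star]

theorem stmt6_sqrt_mul_self {n : Type*} [Fintype n] [DecidableEq n] {N : Matrix n n ℂ}
    (hN : N.PosSemidef) : hN.sqrt * hN.sqrt = N := by
  unfold Matrix.PosSemidef.sqrt
  have hU : (star hN.1.eigenvectorUnitary : Matrix n n ℂ) * hN.1.eigenvectorUnitary.1 = 1 :=
    Unitary.coe_star_mul_self _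
  have hD : diagonal ((RCLike.ofReal : ℝ → ℂ) ∘ (Real.sqrt ·) ∘ hN.1.eigenvalues) *
      diagonal ((RCLike.ofReal : ℝ → ℂ) ∘ (Real.sqrt ·) ∘ hN.1.eigenvalues) =
      diagonal ((RCLike.ofReal : ℝ → ℂ) ∘ hN.1.eigenvalues) := by
    rw [diagonal_mul_diagonal]
    congr 1; funext i
    simp only [Function.comp]
    rw [← RCLike.ofReal_mul, Real.mul_self_sqrt (hN.eigenvalues_nonneg i)]
  conv_rhs => rw [hN.1.spectral_theorem]
  simp only [Matrix.mul_assoc]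
  rw [← Matrix.mul_assoc (star _ : Matrix n n ℂ), hU, Matrix.one_mul,
    ← Matrix.mul_assoc (diagonal _), hD]
  simp [Unitary.conjStarAlgAut_apply, Matrix.mul_assoc]

theorem stmt6_aux {n : Type*} [Fintype n] [DecidableEq n]
    (W N A P Q O : Matrix n n ℂ)
    (hpi : W * Wᴴ * W = W) (hW2 : W * W = 0)
    (hNH : Nᴴ = N) (hAH : Aᴴ = A) (hAA : A * A = N)
    (hNsupp : N * (Wᴴ * W) = N) (hNsupp' : (Wᴴ * W) * N = N)
    (hNker : ∀ x : n → ℂ, N.mulVec x = 0 → (Wᴴ * W).mulVec x = 0)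
    (hP : P = ((2 : ℂ)⁻¹) • (Wᴴ * W + W * Wᴴ + (W + Wᴴ)))
    (hQ : Q = ((2 : ℂ)⁻¹) • (Wᴴ * W + W * Wᴴ - (W + Wᴴ)))
    (hO : O = (4 : ℂ) • ((P * A * P) * (P * A * P))
            - (4 : ℂ) • ((Q * A * Q) * (Q * A * Q))) :
    O = W * N + N * Wᴴ ∧
    O * O = W * (N * N) * Wᴴ + N * N ∧
    (Wᴴ * W + W * Wᴴ) * O = O ∧
    (∀ x : n → ℂ, O.mulVec x = 0 → (Wᴴ * W + W * Wᴴ).mulVec x = 0) ∧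
    P * O = O * P ∧ (P * O).PosSemidef ∧ ((P - 1) * O).PosSemidef ∧
    (∀ x : n → ℂ, P.mulVec x = x → x ≠ 0 → 0 < (star x ⬝ᵥ O.mulVec x).re) := by
  -- basic letter relations
  have hVV : Wᴴ * Wᴴ = 0 := by
    have := congrArg conjTranspose hW2
    simpa [conjTranspose_mul] using this
  have vwv : Wᴴ * (W * Wᴴ) = Wᴴ := by
    have := congrArg conjTranspose hpi
    simpa [conjTranspose_mul] using this
  have hSV : Wᴴ * W * Wᴴ = Wᴴ := by rw [Matrix.mul_assoc, vwv]
  have hVN : Wᴴ * N = 0 := by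
    rw [← hNsupp', ← Matrix.mul_assoc, ← Matrix.mul_assoc, hVV, Matrix.zero_mul,
      Matrix.zero_mul]
  have hNW : N * W = 0 := by
    have := congrArg conjTranspose hVN
    simpa [conjTranspose_mul, hNH] using this
  have hSA : Wᴴ * W * A = A := by
    have hct : (Wᴴ * W * A - A)ᴴ = A * (Wᴴ * W) - A := by
      simp [conjTranspose_sub, conjTranspose_mul, hAH, Matrix.mul_assoc]
    have hexp : (Wᴴ * W * A - A) * (A * (Wᴴ * W) - A)
        = (Wᴴ * W) * (A * A) * (Wᴴ * W) - (Wᴴ * W) * (A * A) - (A * A) * (Wᴴ * W) + A * A := by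
      noncomm_ring
    have hzero : (Wᴴ * W * A - A) * (Wᴴ * W * A - A)ᴴ = 0 := by
      rw [hct, hexp, hAA, hNsupp', hNsupp]
      abel
    exact sub_eq_zero.mp (self_mul_conjTranspose_eq_zero.mp hzero)
  have hAS : A * (Wᴴ * W) = A := by
    have := congrArg conjTranspose hSA
    simpa [conjTranspose_mul, hAH, Matrix.mul_assoc] using this
  have hVA : Wᴴ * A = 0 := by
    have hct : (Wᴴ * A)ᴴ = A * W := by simp [conjTranspose_mul, hAH]
    have hzero : (Wᴴ * A) * (Wᴴ * A)ᴴ = 0 := by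
      rw [hct]
      calc Wᴴ * A * (A * W) = Wᴴ * (A * A) * W := by noncomm_ring
      _ = 0 := by rw [hAA, hVN, Matrix.zero_mul]
    exact self_mul_conjTranspose_eq_zero.mp hzero
  have hAW : A * W = 0 := by
    have := congrArg conjTranspose hVA
    simpa [conjTranspose_mul, hAH] using this
  -- rewriting rules (right-associated)
  have r1 : ∀ M : Matrix n n ℂ, W * (W * M) = 0 := fun M => by
    rw [← Matrix.mul_assoc, hW2, Matrix.zero_mul]
  have r2 : ∀ M : Matrix n n ℂ, Wᴴ * (Wᴴ * M) = 0 := fun M => by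
    rw [← Matrix.mul_assoc, hVV, Matrix.zero_mul]
  have r3 : ∀ M : Matrix n n ℂ, A * (W * M) = 0 := fun M => by
    rw [← Matrix.mul_assoc, hAW, Matrix.zero_mul]
  have r4 : ∀ M : Matrix n n ℂ, Wᴴ * (A * M) = 0 := fun M => by
    rw [← Matrix.mul_assoc, hVA, Matrix.zero_mul]
  have r5 : ∀ M : Matrix n n ℂ, W * (Wᴴ * (W * M)) = W * M := fun M => by
    rw [← Matrix.mul_assoc, ← Matrix.mul_assoc, hpi]
  have r6 : ∀ M : Matrix n n ℂ, Wᴴ * (W * (Wᴴ * M)) = Wᴴ * M := fun M => by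
    rw [← Matrix.mul_assoc, ← Matrix.mul_assoc, hSV]
  have r7 : ∀ M : Matrix n n ℂ, Wᴴ * (W * (A * M)) = A * M := fun M => by
    rw [← Matrix.mul_assoc, ← Matrix.mul_assoc, hSA]
  have r5' : W * (Wᴴ * W) = W := by rw [← Matrix.mul_assoc, hpi]
  have r7' : Wᴴ * (W * A) = A := by rw [← Matrix.mul_assoc, hSA]
  -- conjunct 1
  have hO1 : O = W * N + N * Wᴴ := by
    rw [hO, hP, hQ, ← hAA]
    simp only [smul_mul_assoc, Matrix.mul_smul, add_mul, mul_add, sub_mul, mul_sub,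
      Matrix.mul_assoc, r1, r2, r3, r4, r5, r6, r7, hW2, hVV, hAW, hVA, r5', vwv, r7', hAS,
      Matrix.mul_zero, Matrix.zero_mul, add_zero, zero_add, sub_zero, zero_sub,
      smul_zero, smul_add, smul_sub, smul_smul, smul_neg, neg_zero]
    module
  have hO2 : O * O = W * (N * N) * Wᴴ + N * N := by
    rw [hO1, ← hAA]
    simp only [add_mul, mul_add, Matrix.mul_assoc, r1, r2, r3, r4, r5, r6, r7,
      hW2, hVV, hAW, hVA, r5', vwv, r7', hAS,
      Matrix.mul_zero, Matrix.zero_mul, add_zero, zero_add]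
    abel
  have hO3 : (Wᴴ * W + W * Wᴴ) * O = O := by
    rw [hO1, ← hAA]
    simp only [add_mul, mul_add, Matrix.mul_assoc, r1, r2, r3, r4, r5, r6, r7,
      hW2, hVV, hAW, hVA, r5', vwv, r7', hAS,
      Matrix.mul_zero, Matrix.zero_mul, add_zero, zero_add]
  have hcomm : P * O = O * P := by
    rw [hP, hO1, ← hAA]
    simp only [smul_mul_assoc, Matrix.mul_smul, add_mul, mul_add, Matrix.mul_assoc,
      r1, r2, r3, r4, r5, r6, r7, hW2, hVV, hAW, hVA, r5', vwv, r7', hAS,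
      Matrix.mul_zero, Matrix.zero_mul, add_zero, zero_add, smul_zero, smul_add]
    module
  -- positive square root scalar
  set c : ℂ := (((Real.sqrt 2)⁻¹ : ℝ) : ℂ) with hcdef
  have hc : c * c = (2 : ℂ)⁻¹ := by
    rw [hcdef, ← Complex.ofReal_mul, ← mul_inv, Real.mul_self_sqrt (by norm_num)]
    norm_num
  have hcstar : star c = c := by
    rw [hcdef, Complex.star_def, Complex.conj_ofReal]
  have hcne : c ≠ 0 := by
    rw [hcdef]
    exact Complex.ofReal_ne_zero.mpr (by positivity : (0:ℝ) < (Real.sqrt 2)⁻¹).ne'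
  -- P * O = Bᴴ * B
  have hPO : P * O = (c • (A * (1 + Wᴴ)))ᴴ * (c • (A * (1 + Wᴴ))) := by
    rw [conjTranspose_smul, conjTranspose_mul, conjTranspose_add, conjTranspose_one,
      conjTranspose_conjTranspose, hAH, hcstar, smul_mul_assoc, Matrix.mul_smul,
      smul_smul, hc, hP, hO1, ← hAA]
    simp only [smul_mul_assoc, Matrix.mul_smul, add_mul, mul_add, Matrix.mul_assoc,
      Matrix.one_mul, Matrix.mul_one, r1, r2, r3, r4, r5, r6, r7, hW2, hVV, hAW, hVA,
      r5', vwv, r7', hAS, Matrix.mul_zero, Matrix.zero_mul, add_zero, zero_add,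
      smul_zero, smul_add]
    module
  have hPO' : (P - 1) * O = (c • (A * (1 - Wᴴ)))ᴴ * (c • (A * (1 - Wᴴ))) := by
    rw [conjTranspose_smul, conjTranspose_mul, conjTranspose_sub, conjTranspose_one,
      conjTranspose_conjTranspose, hAH, hcstar, smul_mul_assoc, Matrix.mul_smul,
      smul_smul, hc, hP, hO1, ← hAA]
    simp only [smul_mul_assoc, Matrix.mul_smul, add_mul, mul_add, sub_mul, mul_sub,
      Matrix.mul_assoc, Matrix.one_mul, Matrix.mul_one,
      r1, r2, r3, r4, r5, r6, r7, hW2, hVV, hAW, hVA,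
      r5', vwv, r7', hAS, Matrix.mul_zero, Matrix.zero_mul, add_zero, zero_add,
      smul_zero, smul_add, smul_sub, sub_zero, zero_sub, smul_neg, neg_zero]
    module
  refine ⟨hO1, hO2, hO3, ?_, hcomm, ?_, ?_, ?_⟩
  · -- kernel condition
    intro x hx
    have h2 : (W * (N * N) * Wᴴ + N * N).mulVec x = 0 := by
      rw [← hO2, ← Matrix.mulVec_mulVec, hx, Matrix.mulVec_zero]
    have hWNN : W * (N * N) * Wᴴ = (N * Wᴴ)ᴴ * (N * Wᴴ) := by
      rw [conjTranspose_mul, conjTranspose_conjTranspose, hNH]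
      noncomm_ring
    have hNN : N * N = Nᴴ * N := by rw [hNH]
    have hdots : star x ⬝ᵥ ((N * Wᴴ)ᴴ * (N * Wᴴ)).mulVec x
        + star x ⬝ᵥ (Nᴴ * N).mulVec x = 0 := by
      rw [← hWNN, ← hNN, ← dotProduct_add, ← Matrix.add_mulVec, h2, dotProduct_zero]
    have key : ∀ B : Matrix n n ℂ, ∀ v : n → ℂ,
        star v ⬝ᵥ (Bᴴ * B).mulVec v = star (B.mulVec v) ⬝ᵥ (B.mulVec v) := by
      intro B v
      rw [← Matrix.mulVec_mulVec, dotProduct_mulVec, ← star_mulVec]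
    rw [key, key] at hdots
    have h1z : star ((N * Wᴴ).mulVec x) ⬝ᵥ ((N * Wᴴ).mulVec x) = 0 :=
      ((add_eq_zero_iff_of_nonneg (dotProduct_star_self_nonneg _)
        (dotProduct_star_self_nonneg _)).mp hdots).1
    have h2z : star (N.mulVec x) ⬝ᵥ (N.mulVec x) = 0 :=
      ((add_eq_zero_iff_of_nonneg (dotProduct_star_self_nonneg _)
        (dotProduct_star_self_nonneg _)).mp hdots).2
    have hv1 : (N * Wᴴ).mulVec x = 0 := dotProduct_star_self_eq_zero.mp h1z
    have hv2 : N.mulVec x = 0 := dotProduct_star_self_eq_zero.mp h2z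
    have hWx : Wᴴ.mulVec x = 0 := by
      have := hNker (Wᴴ.mulVec x) (by rw [Matrix.mulVec_mulVec]; exact hv1)
      rwa [Matrix.mulVec_mulVec, hSV] at this
    have hRx : (W * Wᴴ).mulVec x = 0 := by
      rw [← Matrix.mulVec_mulVec, hWx, Matrix.mulVec_zero]
    have hSx : (Wᴴ * W).mulVec x = 0 := hNker x hv2
    rw [Matrix.add_mulVec, hSx, hRx, add_zero]
  · rw [hPO]; exact posSemidef_conjTranspose_mul_self _
  · rw [hPO']; exact posSemidef_conjTranspose_mul_self _
  · -- strict positivity on range of P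
    intro x hPx hx0
    set B : Matrix n n ℂ := c • (A * (1 + Wᴴ)) with hBdef
    have hOx : star x ⬝ᵥ O.mulVec x = star (B.mulVec x) ⬝ᵥ (B.mulVec x) := by
      have h1 : O.mulVec x = (P * O).mulVec x := by
        conv_lhs => rw [← hPx]
        rw [Matrix.mulVec_mulVec, ← hcomm]
      rw [h1, hPO, ← Matrix.mulVec_mulVec, dotProduct_mulVec, ← star_mulVec]
    have hyne : B.mulVec x ≠ 0 := by
      intro hy
      rw [hBdef] at hy
      have hAz : (A * (1 + Wᴴ)).mulVec x = 0 := by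
        have hsm : c • ((A * (1 + Wᴴ)).mulVec x) = 0 := by
          rw [← smul_mulVec]; exact hy
        exact (smul_eq_zero.mp hsm).resolve_left hcne
      have hAz' : A.mulVec ((1 + Wᴴ).mulVec x) = 0 := by
        rw [Matrix.mulVec_mulVec]; exact hAz
      have hNz : N.mulVec ((1 + Wᴴ).mulVec x) = 0 := by
        rw [← hAA, ← Matrix.mulVec_mulVec, hAz', Matrix.mulVec_zero]
      have hS := hNker _ hNz
      rw [Matrix.mulVec_mulVec, Matrix.mul_add, Matrix.mul_one, hSV,
        Matrix.add_mulVec] at hS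
      have h4 : W *ᵥ x + (W * Wᴴ) *ᵥ x = 0 := by
        have := congrArg (fun v => W *ᵥ v) hS
        simpa [Matrix.mulVec_add, Matrix.mulVec_mulVec, r5'] using this
      have hsum : (Wᴴ * W) *ᵥ x + (W * Wᴴ) *ᵥ x + (W *ᵥ x + Wᴴ *ᵥ x) = 0 := by
        calc (Wᴴ * W) *ᵥ x + (W * Wᴴ) *ᵥ x + (W *ᵥ x + Wᴴ *ᵥ x)
            = ((Wᴴ * W) *ᵥ x + Wᴴ *ᵥ x) + (W *ᵥ x + (W * Wᴴ) *ᵥ x) := by abel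
        _ = 0 := by rw [hS, h4, add_zero]
      have hx0' : x = 0 := by
        rw [← hPx, hP, smul_mulVec]
        simp only [Matrix.add_mulVec]
        rw [hsum, smul_zero]
      exact hx0 hx0'
    rw [hOx]
    have hpos : 0 < star (B.mulVec x) ⬝ᵥ (B.mulVec x) :=
      dotProduct_star_self_pos_iff.mpr hyne
    simpa using (Complex.lt_def.mp hpos).1

theorem stmt6 {n : Type*} [Fintype n] [DecidableEq n]
    (W N : Matrix n n ℂ) (hpi : W * Wᴴ * W = W) (hW2 : W * W = 0)
    (hN : N.PosSemidef)
    (hNsupp : N * (Wᴴ * W) = N) (hNsupp' : (Wᴴ * W) * N = N)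
    (hNker : ∀ x : n → ℂ, N.mulVec x = 0 → (Wᴴ * W).mulVec x = 0) :
    (let Pp := ((2 : ℂ)⁻¹) • (Wᴴ * W + W * Wᴴ + (W + Wᴴ))
     let Pm := ((2 : ℂ)⁻¹) • (Wᴴ * W + W * Wᴴ - (W + Wᴴ))
     let O := (4 : ℂ) • ((Pp * hN.sqrt * Pp) * (Pp * hN.sqrt * Pp))
            - (4 : ℂ) • ((Pm * hN.sqrt * Pm) * (Pm * hN.sqrt * Pm))
     O = W * N + N * Wᴴ ∧
     O * O = W * (N * N) * Wᴴ + N * N ∧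
     (Wᴴ * W + W * Wᴴ) * O = O ∧
     (∀ x : n → ℂ, O.mulVec x = 0 → (Wᴴ * W + W * Wᴴ).mulVec x = 0) ∧
     Pp * O = O * Pp ∧ (Pp * O).PosSemidef ∧ ((Pp - 1) * O).PosSemidef ∧
     (∀ x : n → ℂ, Pp.mulVec x = x → x ≠ 0 → 0 < (star x ⬝ᵥ O.mulVec x).re)) := by
  intro Pp Pm O
  exact stmt6_aux W N hN.sqrt Pp Pm O hpi hW2 hN.1 (stmt6_sqrt_herm hN)
    (stmt6_sqrt_mul_self hN) hNsupp hNsupp' hNker rfl rfl rfl
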